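/- Suppose the recursively defined coefficient sequences satisfy Σ_{s=0}^{∞} |a_s| < ∞ and Σ_{r=0}^{∞} |b_{k,r}| < ∞ for every index k. Then λ := Σ_{s=0}^{∞} a_s is an eigenvalue of L with eigenvector x := Σ_{k=1}^{n} (Σ_{r=0}^{∞} b_{k,r})·e_k; that is, L x = λ·x and x ≠ 0 (indeed ⟨x, e_i⟩ = 1). -/

import Mathlib

open scoped InnerProductSpace

private lemma range_succ_eq_Icc (N : ℕ) (f : ℕ → ℂ) :
    ∑ m ∈ Finset.range (N+1), f m = f 0 + ∑ m ∈ Finset.Icc 1 N, f m := by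
  induction N with
  | zero => simp
  | succ N ih =>
      rw [Finset.sum_range_succ, ih, Finset.sum_Icc_succ_top (by omega)]
      ring

/-- If the recursively defined coefficient sequences are absolutely summable, then
`λ = Σ_s a_s` is an eigenvalue of `L` with eigenvector `x = Σ_k (Σ_r b_{k,r}) • e_k`:
`L x = λ • x` and `x ≠ 0` (indeed `⟨x, e_i⟩ = 1`, inner product linear in the first
argument). -/
theorem homotopy_eigenvalue_of_L {E : Type*} [NormedAddCommGroup E]
    [InnerProductSpace ℂ E] [FiniteDimensional ℂ E] {n : ℕ}
    (e : OrthonormalBasis (Fin n) ℂ E)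
    (K L : E →ₗ[ℂ] E) (μ : Fin n → ℂ) (hK : ∀ k, K (e k) = μ k • e k)
    (X : Fin n → Fin n → ℂ) (hX : ∀ m l, X m l = ⟪e l, L (e m)⟫_ℂ)
    (i : Fin n) (hμ : ∀ k, k ≠ i → μ k ≠ μ i)
    (a : ℕ → ℂ) (b : Fin n → ℕ → ℂ)
    (ha0 : a 0 = μ i)
    (hb0 : ∀ k, b k 0 = if k = i then 1 else 0)
    (hbi : ∀ r : ℕ, 1 ≤ r → b i r = 0)
    (hbk : ∀ k, k ≠ i → ∀ r : ℕ, 1 ≤ r →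
      b k r = (μ i - μ k)⁻¹ *
        (∑ j, X j k * b j (r - 1) - ∑ m ∈ Finset.Icc 1 (r - 1), a (r - m) * b k m
          - μ k * b k (r - 1)))
    (har : ∀ r : ℕ, 1 ≤ r →
      a r = ∑ j, X j i * b j (r - 1) + μ i * (b i r - b i (r - 1))
        - ∑ m ∈ Finset.Icc 1 r, a (r - m) * b i m)
    (hasum : Summable fun s : ℕ => ‖a s‖)
    (hbsum : ∀ k : Fin n, Summable fun r : ℕ => ‖b k r‖) :
    L (∑ k, (∑' r : ℕ, b k r) • e k) =
        (∑' s : ℕ, a s) • ∑ k, (∑' r : ℕ, b k r) • e k ∧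
      ⟪e i, ∑ k, (∑' r : ℕ, b k r) • e k⟫_ℂ = 1 ∧
      (∑ k, (∑' r : ℕ, b k r) • e k) ≠ 0 := by
  have hbS : ∀ k, Summable (b k) := fun k => (hbsum k).of_norm
  have haS : Summable a := hasum.of_norm
  -- the per-step identity
  have star : ∀ k, ∀ r : ℕ, ∑ j, X j k * b j r
      = (∑ m ∈ Finset.range (r+2), a (r+1-m) * b k m)
        + (μ k * b k r - μ k * b k (r+1)) := by
    intro k r
    rw [range_succ_eq_Icc (r+1) (fun m => a (r+1-m) * b k m)]
    simp only [Nat.sub_zero]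
    by_cases hk : k = i
    · subst hk
      have h := har (r+1) (by omega)
      simp only [Nat.add_sub_cancel] at h
      rw [hb0, if_pos rfl]
      linear_combination -h
    · have hne : μ i - μ k ≠ 0 := sub_ne_zero.mpr (Ne.symm (hμ k hk))
      have h := hbk k hk (r+1) (by omega)
      simp only [Nat.add_sub_cancel] at h
      have h' : (μ i - μ k) * b k (r+1)
          = ∑ j, X j k * b j r - ∑ m ∈ Finset.Icc 1 r, a (r+1-m) * b k m
            - μ k * b k r := by
        rw [h]; field_simp
      rw [hb0, if_neg hk, Finset.sum_Icc_succ_top (Nat.le_add_left 1 r),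
        Nat.sub_self, ha0]
      linear_combination -h'
  -- the key coefficient identity
  have key : ∀ k, ∑ j, X j k * (∑' r : ℕ, b j r)
      = (∑' s : ℕ, a s) * ∑' r : ℕ, b k r := by
    intro k
    set c : ℕ → ℂ := fun nn => ∑ m ∈ Finset.range (nn+1), a (nn - m) * b k m with hc
    have hceq : ∀ nn, c nn = ∑ m ∈ Finset.range (nn+1), b k m * a (nn - m) :=
      fun nn => Finset.sum_congr rfl fun m _ => mul_comm _ _
    have hcS : Summable c :=
      ((summable_norm_sum_mul_range_of_summable_norm (hbsum k) hasum).of_norm).congr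
        fun nn => (hceq nn).symm
    have hct : ∑' nn, c nn = (∑' s : ℕ, a s) * ∑' r : ℕ, b k r := by
      rw [mul_comm, tsum_mul_tsum_eq_tsum_sum_range_of_summable_norm (hbsum k) hasum]
      exact tsum_congr fun nn => hceq nn
    have hswap : ∑' r : ℕ, ∑ j, X j k * b j r = ∑ j, X j k * ∑' r : ℕ, b j r := by
      rw [Summable.tsum_finsetSum (fun j _ => (hbS j).mul_left _)]
      exact Finset.sum_congr rfl fun j _ => tsum_mul_left
    have S1 : Summable (fun r : ℕ => c (r+1)) := (summable_nat_add_iff 1).2 hcS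
    have S2a : Summable (fun r : ℕ => μ k * b k r) := (hbS k).mul_left _
    have S2b : Summable (fun r : ℕ => μ k * b k (r+1)) :=
      ((summable_nat_add_iff 1).2 (hbS k)).mul_left _
    have S2 : Summable (fun r : ℕ => μ k * b k r - μ k * b k (r+1)) := S2a.sub S2b
    have T1 : ∑' r : ℕ, c (r+1) = (∑' nn, c nn) - c 0 := by
      rw [Summable.tsum_eq_zero_add hcS]; ring
    have T2 : ∑' r : ℕ, (μ k * b k r - μ k * b k (r+1)) = μ k * b k 0 := by
      rw [Summable.tsum_sub S2a S2b, tsum_mul_left, tsum_mul_left,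
        Summable.tsum_eq_zero_add (hbS k)]
      ring
    have hc0 : c 0 = μ i * b k 0 := by
      simp [hc, ha0]
    have := tsum_congr (L := SummationFilter.unconditional ℕ) (star k)
    rw [hswap, Summable.tsum_add S1 S2, T1, T2, hct, hc0] at this
    rw [this]
    by_cases hk : k = i
    · subst hk; ring
    · rw [hb0, if_neg hk]; ring
  have horth := orthonormal_iff_ite.mp e.orthonormal
  have hxi1 : ∑' r : ℕ, b i r = 1 := by
    rw [Summable.tsum_eq_zero_add (hbS i), hb0, if_pos rfl]
    have : (fun r : ℕ => b i (r+1)) = fun _ => 0 :=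
      funext fun r => hbi (r+1) (by omega)
    rw [this, tsum_zero, add_zero]
  have hx2 : ⟪e i, ∑ k, (∑' r : ℕ, b k r) • e k⟫_ℂ = 1 := by
    rw [inner_sum]
    simp only [inner_smul_right]
    rw [Finset.sum_eq_single i
      (fun k _ hk => by rw [horth i k, if_neg (Ne.symm hk), mul_zero])
      (fun h => absurd (Finset.mem_univ i) h)]
    rw [horth i i, if_pos rfl, mul_one, hxi1]
  refine ⟨?_, hx2, ?_⟩
  · rw [map_sum]
    have hLe : ∀ k, L (e k) = ∑ l, X k l • e l := by
      intro k
      conv_lhs => rw [← e.sum_repr' (L (e k))]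
      exact Finset.sum_congr rfl fun l _ => by rw [hX k l]
    calc ∑ k, L ((∑' r : ℕ, b k r) • e k)
        = ∑ k, ∑ l, ((∑' r : ℕ, b k r) * X k l) • e l := by
          refine Finset.sum_congr rfl fun k _ => ?_
          rw [map_smul, hLe k, Finset.smul_sum]
          exact Finset.sum_congr rfl fun l _ => smul_smul _ _ _
      _ = ∑ l, (∑ k, X k l * ∑' r : ℕ, b k r) • e l := by
          rw [Finset.sum_comm]
          refine Finset.sum_congr rfl fun l _ => ?_
          rw [Finset.sum_smul]
          exact Finset.sum_congr rfl fun k _ => by rw [mul_comm]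
      _ = ∑ l, ((∑' s : ℕ, a s) * ∑' r : ℕ, b l r) • e l :=
          Finset.sum_congr rfl fun l _ => by rw [key l]
      _ = (∑' s : ℕ, a s) • ∑ k, (∑' r : ℕ, b k r) • e k := by
          rw [Finset.smul_sum]
          exact Finset.sum_congr rfl fun k _ => (smul_smul _ _ _).symm
  · intro h0
    rw [h0, inner_zero_right] at hx2
    exact zero_ne_one hx2
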